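/- Let a, b, k be nonnegative integers with a + b ≤ k − 1. Then 𝒟^{(2)}_{(a, k−a−b, b)}(z, q) − 𝒟^{(2)}_{(a+1, k−a−b−1, b)}(z, q) = Σ_{i=0}^{a} Σ_{j=0}^{k−a} (zq)^{k+i−a+min(0, j−b)} q^{i+j} · 𝒟^{(2)}_{(i, k−i−j, j)}(zq², q). -/

import Mathlib

noncomputable section

/-- The weight (sum of parts) of a coloured partition given by its multiplicity
function `f`, where `f (i, c)` is the number of parts equal to `i` of colour `c`. -/
def wt (f : ℕ × ℕ →₀ ℕ) : ℕ := f.sum fun p v => p.1 * v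

/-- The length (number of parts) of a coloured partition. -/
def len (f : ℕ × ℕ →₀ ℕ) : ℕ := f.sum fun _ v => v

/-- `f` is a type-`C` coloured partition for rank `n`: parts are at least `1`, colours
lie in `{1, …, 2n+1}`, and parts of colour `c` have the same parity as `c`
(i.e. `fᵢ⁽ᶜ⁾ = 0` unless `i + c` is even). -/
def IsCPC (n : ℕ) (f : ℕ × ℕ →₀ ℕ) : Prop :=
  ∀ p ∈ f.support, 1 ≤ p.1 ∧ 1 ≤ p.2 ∧ p.2 ≤ 2 * n + 1 ∧ (p.1 + p.2) % 2 = 0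

/-- The extended frequencies of a type-`C` coloured partition, with boundary conditions
`f₋₁⁽²ᶜ⁺¹⁾ = k c` (for `0 ≤ c ≤ n`) and `f₀⁽²ᶜ⁾ = 0`. -/
def fextC (k : ℕ → ℕ) (f : ℕ × ℕ →₀ ℕ) (i : ℤ) (c : ℕ) : ℕ :=
  if i = -1 then (if c % 2 = 1 then k ((c - 1) / 2) else 0) else f (i.toNat, c)

/-- Membership in the set `𝒞_{k₀,…,kₙ}`: `f` is a type-`C` coloured partition and every
path — a sequence of integers `p 0, …, p (2n)` with `p j ≥ -1`, `p j + j + 1` even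
(entry `j` is read in colour `j + 1`) and `|p (j+1) - p j| = 1` — has total weight at
most `k₀ + ⋯ + kₙ`. -/
def MemC (n : ℕ) (k : ℕ → ℕ) (f : ℕ × ℕ →₀ ℕ) : Prop :=
  IsCPC n f ∧
  ∀ p : ℕ → ℤ,
    (∀ j < 2 * n + 1, -1 ≤ p j ∧ (p j + (j : ℤ) + 1) % 2 = 0) →
    (∀ j, j + 1 < 2 * n + 1 → |p (j + 1) - p j| = 1) →
    ∑ j ∈ Finset.range (2 * n + 1), fextC k f (p j) (j + 1) ≤ ∑ c ∈ Finset.range (n + 1), k c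

/-- `f` is a type-`D` coloured partition for rank `n`: parts are at least `1`, colours
lie in `{1, …, 2n−1}`, and `fᵢ⁽ᶜ⁾ = 0` unless `i + c` is odd. -/
def IsCPD (n : ℕ) (f : ℕ × ℕ →₀ ℕ) : Prop :=
  ∀ p ∈ f.support, 1 ≤ p.1 ∧ 1 ≤ p.2 ∧ p.2 ≤ 2 * n - 1 ∧ (p.1 + p.2) % 2 = 1

/-- The extended frequencies of a type-`D` coloured partition, with boundary conditions
`f₋₁⁽²ᶜ⁾ = k c` (for `1 ≤ c ≤ n−1`), `f₀⁽¹⁾ = k 0`, `f₀⁽²ⁿ⁻¹⁾ = k n` and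
`f₀⁽²ᶜ⁻¹⁾ = 0` otherwise. -/
def fextD (n : ℕ) (k : ℕ → ℕ) (f : ℕ × ℕ →₀ ℕ) (i : ℤ) (c : ℕ) : ℕ :=
  if i = -1 then (if c % 2 = 0 then k (c / 2) else 0)
  else if i = 0 then (if c = 1 then k 0 else if c = 2 * n - 1 then k n else 0)
  else f (i.toNat, c)

/-- Membership in the set `𝒟_{k₀,…,kₙ}`: `f` is a type-`D` coloured partition and every
path — a sequence of integers `p 0, …, p (2n-2)` with `p j ≥ -1`, `p j + j + 1` odd
(entry `j` is read in colour `j + 1`) and `|p (j+1) - p j| = 1` — has total weight at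
most `k₀ + ⋯ + kₙ`. -/
def MemD (n : ℕ) (k : ℕ → ℕ) (f : ℕ × ℕ →₀ ℕ) : Prop :=
  IsCPD n f ∧
  ∀ p : ℕ → ℤ,
    (∀ j < 2 * n - 1, -1 ≤ p j ∧ (p j + (j : ℤ) + 1) % 2 = 1) →
    (∀ j, j + 1 < 2 * n - 1 → |p (j + 1) - p j| = 1) →
    ∑ j ∈ Finset.range (2 * n - 1), fextD n k f (p j) (j + 1) ≤ ∑ c ∈ Finset.range (n + 1), k c

/-- The two-variable generating function `𝒞⁽ⁿ⁾_{(k₀,…,kₙ)}(z,q)`, a power series in the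
outer variable `z` with coefficients power series in `q`: the coefficient of `zˡ qᴺ` is
the number of partitions in `𝒞_{k₀,…,kₙ}` with `l(λ) = l` and `|λ| = N`. -/
def CGF (n : ℕ) (k : ℕ → ℕ) : PowerSeries (PowerSeries ℚ) :=
  PowerSeries.mk fun l => PowerSeries.mk fun N =>
    (Nat.card {f : ℕ × ℕ →₀ ℕ // MemC n k f ∧ len f = l ∧ wt f = N} : ℚ)

/-- The two-variable generating function `𝒟⁽ⁿ⁾_{(k₀,…,kₙ)}(z,q)`. -/
def DGF (n : ℕ) (k : ℕ → ℕ) : PowerSeries (PowerSeries ℚ) :=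
  PowerSeries.mk fun l => PowerSeries.mk fun N =>
    (Nat.card {f : ℕ × ℕ →₀ ℕ // MemD n k f ∧ len f = l ∧ wt f = N} : ℚ)

/-- The substitution `z ↦ z qᶜ` on a two-variable series. -/
def zsub (c : ℕ) (F : PowerSeries (PowerSeries ℚ)) : PowerSeries (PowerSeries ℚ) :=
  PowerSeries.mk fun l =>
    (PowerSeries.X : PowerSeries ℚ) ^ (c * l) * PowerSeries.coeff (R := PowerSeries ℚ) l F

/-- The variable `z`. -/
def Zv : PowerSeries (PowerSeries ℚ) := PowerSeries.X

/-- The variable `q`. -/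
def Qv : PowerSeries (PowerSeries ℚ) := PowerSeries.C (R := PowerSeries ℚ) PowerSeries.X

/-- `F1 k0 f u` : the extended colour-1 frequency at (even) index `u ≥ 0`. -/
def F1 (k0 : ℕ) (f : ℕ × ℕ →₀ ℕ) (u : ℕ) : ℕ := if u = 0 then k0 else f (u, 1)
/-- `F3 k2 f u` : the extended colour-3 frequency at (even) index `u ≥ 0`. -/
def F3 (k2 : ℕ) (f : ℕ × ℕ →₀ ℕ) (u : ℕ) : ℕ := if u = 0 then k2 else f (u, 3)

lemma fextD_eval1 (k : ℕ → ℕ) (f : ℕ × ℕ →₀ ℕ) (x : ℤ) (hx : 0 ≤ x) :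
    fextD 2 k f x 1 = F1 (k 0) f x.toNat := by
  unfold fextD F1
  rcases eq_or_lt_of_le hx with h | h
  · rw [if_neg (by omega), if_pos (by omega), if_pos rfl, if_pos (by omega)]
  · rw [if_neg (by omega), if_neg (by omega), if_neg (by omega)]

lemma fextD_eval3 (k : ℕ → ℕ) (f : ℕ × ℕ →₀ ℕ) (x : ℤ) (hx : 0 ≤ x) :
    fextD 2 k f x 3 = F3 (k 2) f x.toNat := by
  unfold fextD F3
  rcases eq_or_lt_of_le hx with h | h
  · rw [if_neg (by omega), if_pos (by omega), if_neg (by norm_num),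
      if_pos (by norm_num), if_pos (by omega)]
  · rw [if_neg (by omega), if_neg (by omega), if_neg (by omega)]

lemma fextD_eval2 (k : ℕ → ℕ) (f : ℕ × ℕ →₀ ℕ) (x : ℤ) (hx : 1 ≤ x) :
    fextD 2 k f x 2 = f (x.toNat, 2) := by
  unfold fextD
  rw [if_neg (by omega), if_neg (by omega)]

lemma memD2_iff (k : ℕ → ℕ) (f : ℕ × ℕ →₀ ℕ) :
    MemD 2 k f ↔ IsCPD 2 f ∧ ∀ m u v : ℕ, m % 2 = 1 →
      (u = m - 1 ∨ u = m + 1) → (v = m - 1 ∨ v = m + 1) →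
      F1 (k 0) f u + f (m, 2) + F3 (k 2) f v ≤ k 0 + k 1 + k 2 := by
  constructor
  · rintro ⟨hc, hp⟩
    refine ⟨hc, ?_⟩
    intro m u v hm hu hv
    have h1 : 1 ≤ m := by omega
    have := hp (fun t => if t = 0 then (u : ℤ) else if t = 1 then (m : ℤ) else (v : ℤ))
      (by
        intro j hj
        have hj3 : j < 3 := by omega
        interval_cases j <;> simp <;> omega)
      (by
        intro j hj
        have hj3 : j < 2 := by omega
        interval_cases j <;> simp <;> rw [abs_eq (by norm_num : (0:ℤ) ≤ 1)] <;> omega)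
    norm_num [Finset.sum_range_succ] at this
    rw [fextD_eval1 k f _ (by positivity), fextD_eval2 k f _ (by exact_mod_cast h1),
      fextD_eval3 k f _ (by positivity), Int.toNat_natCast, Int.toNat_natCast,
      Int.toNat_natCast] at this
    linarith
  · rintro ⟨hc, H⟩
    refine ⟨hc, ?_⟩
    intro p hpar hstep
    obtain ⟨h0, hp0⟩ := hpar 0 (by norm_num)
    obtain ⟨h1, hp1⟩ := hpar 1 (by norm_num)
    obtain ⟨h2, hp2⟩ := hpar 2 (by norm_num)
    have hs0 := hstep 0 (by norm_num)
    have hs1 := hstep 1 (by norm_num)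
    rw [abs_eq (by norm_num : (0:ℤ) ≤ 1)] at hs0 hs1
    norm_num at hs0 hs1 hp0 hp1 hp2
    rw [show (2 * 2 - 1 : ℕ) = 3 from rfl, Finset.sum_range_succ, Finset.sum_range_succ,
      Finset.sum_range_succ, Finset.sum_range_zero, show (2:ℕ)+1 = 3 from rfl,
      Finset.sum_range_succ, Finset.sum_range_succ, Finset.sum_range_succ,
      Finset.sum_range_zero]
    by_cases hm1 : p 1 = -1
    · have e0 : p 0 = 0 := by omega
      have e2' : p 2 = 0 := by omega
      rw [hm1, e0, e2']
      norm_num [fextD]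
    · have hge : 1 ≤ p 1 := by omega
      have key := H (p 1).toNat (p 0).toNat (p 2).toNat (by omega) (by omega) (by omega)
      rw [fextD_eval1 k f _ (by omega), fextD_eval2 k f _ hge, fextD_eval3 k f _ (by omega)]
      omega

def κD (x y z : ℕ) : ℕ → ℕ := fun t => if t = 0 then x else if t = 1 then y else if t = 2 then z else 0

@[simp] lemma κD_0 (x y z : ℕ) : κD x y z 0 = x := rfl
@[simp] lemma κD_1 (x y z : ℕ) : κD x y z 1 = y := rfl
@[simp] lemma κD_2 (x y z : ℕ) : κD x y z 2 = z := rfl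

lemma mem_diff_char (a b k : ℕ) (h : a + b + 1 ≤ k) (f : ℕ × ℕ →₀ ℕ) :
    (MemD 2 (κD a (k-a-b) b) f ∧ ¬ MemD 2 (κD (a+1) (k-a-b-1) b) f)
    ↔ MemD 2 (κD a (k-a-b) b) f ∧ a + f (1,2) + max b (f (2,3)) = k := by
  constructor
  · rintro ⟨hA, hB⟩
    refine ⟨hA, ?_⟩
    rw [memD2_iff] at hA hB
    obtain ⟨hc, Hcond⟩ := hA
    have hB' : ¬ ∀ m u v : ℕ, m % 2 = 1 →
        (u = m - 1 ∨ u = m + 1) → (v = m - 1 ∨ v = m + 1) →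
        F1 (κD (a+1) (k-a-b-1) b 0) f u + f (m, 2) + F3 (κD (a+1) (k-a-b-1) b 2) f v ≤
          κD (a+1) (k-a-b-1) b 0 + κD (a+1) (k-a-b-1) b 1 + κD (a+1) (k-a-b-1) b 2 :=
      fun hh => hB ⟨hc, hh⟩
    push_neg at hB'
    obtain ⟨m, u, v, hm, hu, hv, hgt⟩ := hB'
    simp only [κD_0, κD_1, κD_2] at hgt Hcond
    have hx := Hcond m u v hm hu hv
    by_cases hu0 : u = 0
    · have hm1 : m = 1 := by omega
      subst hm1; subst hu0
      simp only [F1, if_pos rfl] at hgt hx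
      have e1 := Hcond 1 0 0 rfl (by omega) (by omega)
      have e2 := Hcond 1 0 2 rfl (by omega) (by omega)
      simp only [F1, F3] at e1 e2
      norm_num at e1 e2 hgt hx
      have hv02 : v = 0 ∨ v = 2 := by omega
      rcases hv02 with rfl | rfl
      · simp only [F3] at hgt hx; norm_num at hgt hx; omega
      · simp only [F3] at hgt hx; norm_num at hgt hx; omega
    · exfalso
      simp only [F1, if_neg hu0] at hgt hx
      omega
  · rintro ⟨hA, heq⟩
    refine ⟨hA, ?_⟩
    intro hB
    rw [memD2_iff] at hB
    obtain ⟨_, HB⟩ := hB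
    have e1 := HB 1 0 0 rfl (by omega) (by omega)
    have e2 := HB 1 0 2 rfl (by omega) (by omega)
    simp only [κD_0, κD_1, κD_2, F1, F3] at e1 e2
    norm_num at e1 e2
    omega

def embP : ℕ × ℕ ↪ ℕ × ℕ :=
  ⟨fun p => (p.1 + 2, p.2), by rintro ⟨x1, x2⟩ ⟨y1, y2⟩ hxy; simp only [Prod.mk.injEq] at hxy ⊢; omega⟩

def upF (i c j : ℕ) (g : ℕ × ℕ →₀ ℕ) : ℕ × ℕ →₀ ℕ :=
  Finsupp.embDomain embP g + Finsupp.single (2,1) i + Finsupp.single (1,2) c +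
    Finsupp.single (2,3) j

def downF (f : ℕ × ℕ →₀ ℕ) : ℕ × ℕ →₀ ℕ :=
  ((Finsupp.comapDomain (fun p : ℕ × ℕ => (p.1 + 2, p.2)) f
    (Set.injOn_of_injective (fun x y hxy => by
      simp only [Prod.mk.injEq] at hxy; exact Prod.ext (by omega) hxy.2))).erase (0,1)).erase (0,3)

lemma embD_apply (g : ℕ × ℕ →₀ ℕ) (m d : ℕ) :
    Finsupp.embDomain embP g (m, d) = if 2 ≤ m then g (m - 2, d) else 0 := by
  rcases m with _ | _ | n
  · rw [if_neg (by omega)]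
    exact Finsupp.embDomain_notin_range _ _ _ (by rintro ⟨⟨x1, x2⟩, hx⟩; change (x1 + 2, x2) = _ at hx; simp only [Prod.mk.injEq] at hx; omega)
  · rw [if_neg (by omega)]
    exact Finsupp.embDomain_notin_range _ _ _ (by rintro ⟨⟨x1, x2⟩, hx⟩; change (x1 + 2, x2) = _ at hx; simp only [Prod.mk.injEq] at hx; omega)
  · rw [if_pos (by omega)]
    exact Finsupp.embDomain_apply_self embP g (n, d)

lemma upF_apply (i c j : ℕ) (g : ℕ × ℕ →₀ ℕ) (m d : ℕ) :
    upF i c j g (m, d) = (if 2 ≤ m then g (m - 2, d) else 0) + (if m = 2 ∧ d = 1 then i else 0)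
      + (if m = 1 ∧ d = 2 then c else 0) + (if m = 2 ∧ d = 3 then j else 0) := by
  have h1 : (((2,1) : ℕ × ℕ) = (m,d)) ↔ (m = 2 ∧ d = 1) := by
    constructor <;> rintro hh <;> simp_all [Prod.ext_iff] <;> omega
  have h2 : (((1,2) : ℕ × ℕ) = (m,d)) ↔ (m = 1 ∧ d = 2) := by
    constructor <;> rintro hh <;> simp_all [Prod.ext_iff] <;> omega
  have h3 : (((2,3) : ℕ × ℕ) = (m,d)) ↔ (m = 2 ∧ d = 3) := by
    constructor <;> rintro hh <;> simp_all [Prod.ext_iff] <;> omega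
  simp only [upF, Finsupp.add_apply, embD_apply, Finsupp.single_apply, h1, h2, h3]

lemma downF_apply (f : ℕ × ℕ →₀ ℕ) (m d : ℕ) :
    downF f (m, d) = if m = 0 ∧ (d = 1 ∨ d = 3) then 0 else f (m + 2, d) := by
  simp only [downF, Finsupp.erase_apply, Finsupp.comapDomain_apply]
  split_ifs <;> simp_all [Prod.ext_iff] <;> omega

lemma len_add (f g : ℕ × ℕ →₀ ℕ) : len (f + g) = len f + len g :=
  Finsupp.sum_add_index' (fun _ => rfl) (fun _ _ _ => rfl)

lemma wt_add (f g : ℕ × ℕ →₀ ℕ) : wt (f + g) = wt f + wt g :=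
  Finsupp.sum_add_index' (fun p => by simp [wt]) (fun p v w => by simp [wt, Nat.mul_add])

lemma len_single (p : ℕ × ℕ) (v : ℕ) : len (Finsupp.single p v) = v :=
  Finsupp.sum_single_index rfl

lemma wt_single (p : ℕ × ℕ) (v : ℕ) : wt (Finsupp.single p v) = p.1 * v :=
  Finsupp.sum_single_index (by simp)

lemma len_emb (g : ℕ × ℕ →₀ ℕ) : len (Finsupp.embDomain embP g) = len g := by
  unfold len
  rw [Finsupp.sum_embDomain]

lemma wt_emb (g : ℕ × ℕ →₀ ℕ) : wt (Finsupp.embDomain embP g) = wt g + 2 * len g := by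
  unfold wt len
  rw [Finsupp.sum_embDomain]
  have : (g.sum fun a v => (embP a).1 * v) = g.sum fun a v => a.1 * v + 2 * v := by
    apply Finsupp.sum_congr
    intro p _
    show (p.1 + 2) * _ = _
    ring
  rw [this, Finsupp.sum_add]
  congr 1
  rw [Finsupp.mul_sum]

lemma len_upF (i c j : ℕ) (g : ℕ × ℕ →₀ ℕ) : len (upF i c j g) = len g + i + c + j := by
  unfold upF
  rw [len_add, len_add, len_add, len_single, len_single, len_single, len_emb]

lemma wt_upF (i c j : ℕ) (g : ℕ × ℕ →₀ ℕ) :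
    wt (upF i c j g) = wt g + 2 * len g + (2 * i + c + 2 * j) := by
  unfold upF
  rw [wt_add, wt_add, wt_add, wt_single, wt_single, wt_single, wt_emb]
  simp
  ring

lemma zero_of_cpd0 (f : ℕ × ℕ →₀ ℕ) (hf : IsCPD 2 f) (d : ℕ) : f (0, d) = 0 := by
  by_contra hne
  exact absurd (hf (0,d) (Finsupp.mem_support_iff.2 hne)).1 (by omega)

lemma zero_of_cpd1 (f : ℕ × ℕ →₀ ℕ) (hf : IsCPD 2 f) (d : ℕ) (hd : d ≠ 2) : f (1, d) = 0 := by
  by_contra hne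
  obtain ⟨_, h1, h2, h3⟩ := hf (1,d) (Finsupp.mem_support_iff.2 hne)
  omega

lemma down_up (i c j : ℕ) (g : ℕ × ℕ →₀ ℕ) (hg : IsCPD 2 g) : downF (upF i c j g) = g := by
  ext p
  obtain ⟨m, d⟩ := p
  rw [downF_apply, upF_apply]
  split_ifs <;> first
    | omega
    | (exact (zero_of_cpd0 g hg d).symm)
    | simp_all [zero_of_cpd0 g hg]
    | (simp_all [zero_of_cpd0 g hg]; omega)

lemma up_down (i c j : ℕ) (f : ℕ × ℕ →₀ ℕ) (hf : IsCPD 2 f) (hc : f (1,2) = c)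
    (hi : f (2,1) = i) (hj : f (2,3) = j) : upF i c j (downF f) = f := by
  ext p
  obtain ⟨m, d⟩ := p
  rw [upF_apply]
  rcases m with _ | _ | n
  · norm_num
    exact (zero_of_cpd0 f hf d).symm
  · norm_num
    split_ifs with hd
    · subst hd; exact hc.symm
    · exact (zero_of_cpd1 f hf d hd).symm
  · rw [if_pos (by omega), downF_apply]
    rcases n with _ | n'
    · by_cases hd1 : d = 1
      · subst hd1; simp [hi]
      · by_cases hd3 : d = 3
        · subst hd3; simp [hj]
        · rw [if_neg (by omega)]
          simp [hd1, hd3]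
    · rw [if_neg (by omega)]
      split_ifs <;> simp_all

lemma upF_at21 (i c j : ℕ) (g : ℕ × ℕ →₀ ℕ) (hg : IsCPD 2 g) : upF i c j g (2,1) = i := by
  rw [upF_apply]; simp [zero_of_cpd0 g hg]

lemma upF_at12 (i c j : ℕ) (g : ℕ × ℕ →₀ ℕ) : upF i c j g (1,2) = c := by
  rw [upF_apply]; norm_num

lemma upF_at23 (i c j : ℕ) (g : ℕ × ℕ →₀ ℕ) (hg : IsCPD 2 g) : upF i c j g (2,3) = j := by
  rw [upF_apply]; simp [zero_of_cpd0 g hg]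

lemma upF_big (i c j : ℕ) (g : ℕ × ℕ →₀ ℕ) (m d : ℕ) (hm : 3 ≤ m) :
    upF i c j g (m, d) = g (m - 2, d) := by
  rw [upF_apply, if_pos (by omega), if_neg (by omega), if_neg (by omega), if_neg (by omega)]
  ring

lemma memD_up (a b k i j : ℕ) (h : a + b + 1 ≤ k) (hi : i ≤ a) (hj : j ≤ k - a)
    (g : ℕ × ℕ →₀ ℕ) (hg : MemD 2 (κD i (k-i-j) j) g) :
    MemD 2 (κD a (k-a-b) b) (upF i (k - a - max b j) j g) := by
  rw [memD2_iff] at hg ⊢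
  obtain ⟨hgc, HG⟩ := hg
  simp only [κD_0, κD_1, κD_2] at HG ⊢
  set c := k - a - max b j with hcdef
  constructor
  · rintro ⟨m, d⟩ hp
    have hne := Finsupp.mem_support_iff.1 hp
    rw [upF_apply] at hne
    by_cases h1 : 2 ≤ m
    · by_cases h2 : g (m - 2, d) = 0
      · rw [h2] at hne
        split_ifs at hne <;> first | omega | simp_all
      · obtain ⟨p1, p2, p3, p4⟩ := hgc (m - 2, d) (Finsupp.mem_support_iff.2 h2)
        refine ⟨by omega, by omega, by omega, by omega⟩
    · rw [if_neg h1] at hne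
      split_ifs at hne <;> first | omega | simp_all
  · intro m u v hm hu hv
    have hk1 : a + (k - a - b) + b = k := by omega
    by_cases hm1 : m = 1
    · subst hm1
      have hu02 : u = 0 ∨ u = 2 := by omega
      have hv02 : v = 0 ∨ v = 2 := by omega
      have e2 : upF i c j g (1, 2) = c := upF_at12 i c j g
      have hF1 : F1 a (upF i c j g) u ≤ a := by
        rcases hu02 with rfl | rfl
        · simp [F1]
        · simp [F1, upF_at21 i c j g hgc, hi]
      have hF3 : F3 b (upF i c j g) v ≤ max b j := by
        rcases hv02 with rfl | rfl
        · simp [F3]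
        · simp [F3, upF_at23 i c j g hgc]
      omega
    · have hm3 : 3 ≤ m := by omega
      have key := HG (m - 2) (u - 2) (v - 2) (by omega) (by omega) (by omega)
      have hu2 : 2 ≤ u := by omega
      have hv2 : 2 ≤ v := by omega
      have e2 : upF i c j g (m, 2) = g (m - 2, 2) := upF_big i c j g m 2 hm3
      have eF1 : F1 a (upF i c j g) u = F1 i g (u - 2) := by
        rcases eq_or_lt_of_le hu2 with hu' | hu'
        · rw [← hu']
          simp [F1, upF_at21 i c j g hgc]
        · unfold F1
          rw [if_neg (by omega), if_neg (by omega), upF_big i c j g u 1 (by omega)]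
      have eF3 : F3 b (upF i c j g) v = F3 j g (v - 2) := by
        rcases eq_or_lt_of_le hv2 with hv' | hv'
        · rw [← hv']
          simp [F3, upF_at23 i c j g hgc]
        · unfold F3
          rw [if_neg (by omega), if_neg (by omega), upF_big i c j g v 3 (by omega)]
      omega

lemma memD_down (a b k i j : ℕ) (h : a + b + 1 ≤ k) (hi : i ≤ a) (hj : j ≤ k - a)
    (f : ℕ × ℕ →₀ ℕ) (hA : MemD 2 (κD a (k-a-b) b) f) (hfi : f (2,1) = i)
    (hfj : f (2,3) = j) : MemD 2 (κD i (k-i-j) j) (downF f) := by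
  rw [memD2_iff] at hA ⊢
  obtain ⟨hc, HA⟩ := hA
  simp only [κD_0, κD_1, κD_2] at HA ⊢
  constructor
  · rintro ⟨m, d⟩ hp
    have hne := Finsupp.mem_support_iff.1 hp
    rw [downF_apply] at hne
    split_ifs at hne with hcond
    · omega
    · obtain ⟨p1, p2, p3, p4⟩ := hc (m + 2, d) (Finsupp.mem_support_iff.2 hne)
      have p2' : 1 ≤ d := p2
      have p3' : d ≤ 2 * 2 - 1 := p3
      have p4' : (m + 2 + d) % 2 = 1 := p4
      refine ⟨?_, by omega, by omega, by omega⟩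
      by_contra hm0
      have hm00 : m = 0 := by omega
      subst hm00
      have hd13 : ¬(d = 1 ∨ d = 3) := fun hd => hcond ⟨rfl, hd⟩
      omega
  · intro m u v hm hu hv
    have key := HA (m + 2) (u + 2) (v + 2) (by omega) (by omega) (by omega)
    have e2 : downF f (m, 2) = f (m + 2, 2) := by
      rw [downF_apply, if_neg (by omega)]
    have eF1 : F1 i (downF f) u = F1 a f (u + 2) := by
      unfold F1
      rcases Nat.eq_zero_or_pos u with rfl | hu'
      · rw [if_pos rfl, if_neg (by omega)]
        exact hfi.symm
      · rw [if_neg (by omega), if_neg (by omega), downF_apply, if_neg (by omega)]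
    have eF3 : F3 j (downF f) v = F3 b f (v + 2) := by
      unfold F3
      rcases Nat.eq_zero_or_pos v with rfl | hv'
      · rw [if_pos rfl, if_neg (by omega)]
        exact hfj.symm
      · rw [if_neg (by omega), if_neg (by omega), downF_apply, if_neg (by omega)]
    omega

lemma finD (k : ℕ → ℕ) (l N : ℕ) :
    {f : ℕ × ℕ →₀ ℕ | MemD 2 k f ∧ len f = l ∧ wt f = N}.Finite := by
  classical
  apply Set.Finite.subset (Set.finite_Iic
    (Finsupp.indicator (Finset.range (N+1) ×ˢ Finset.range 4) (fun _ _ => N)))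
  rintro f ⟨⟨hcpd, _⟩, _, hwt⟩
  rw [Set.mem_Iic, Finsupp.le_def]
  intro p
  by_cases hp : f p = 0
  · simp [hp]
  · have hmem : p ∈ f.support := Finsupp.mem_support_iff.2 hp
    obtain ⟨h1, h2, h3, h4⟩ := hcpd p hmem
    have hterm : p.1 * f p ≤ f.support.sum fun q => q.1 * f q :=
      Finset.single_le_sum (f := fun q => q.1 * f q) (fun q _ => Nat.zero_le _) hmem
    have hwt' : f.support.sum (fun q => q.1 * f q) = N := hwt
    have hfp : f p ≤ N := by
      have := Nat.le_mul_of_pos_left (f p) (show 0 < p.1 by omega)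
      omega
    have hp1 : p.1 ≤ N := by
      have := Nat.le_mul_of_pos_right p.1 (show 0 < f p by omega)
      omega
    rw [Finsupp.indicator_apply, dif_pos (by
      rw [Finset.mem_product]
      constructor <;> rw [Finset.mem_range] <;> omega)]
    exact hfp

def cntD (x y z l N : ℕ) : ℕ :=
  Nat.card {f : ℕ × ℕ →₀ ℕ // MemD 2 (κD x y z) f ∧ len f = l ∧ wt f = N}

lemma cntD_eq_card (x y z l N : ℕ) :
    cntD x y z l N = (finD (κD x y z) l N).toFinset.card := by
  have h1 : cntD x y z l N =
      Nat.card {f : ℕ × ℕ →₀ ℕ | MemD 2 (κD x y z) f ∧ len f = l ∧ wt f = N} := rfl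
  rw [h1, Nat.card_coe_set_eq, Set.ncard_eq_toFinset_card _ (finD (κD x y z) l N)]

lemma memD_mono (a b k : ℕ) (h : a + b + 1 ≤ k) (f : ℕ × ℕ →₀ ℕ)
    (hB : MemD 2 (κD (a+1) (k-a-b-1) b) f) : MemD 2 (κD a (k-a-b) b) f := by
  rw [memD2_iff] at hB ⊢
  obtain ⟨hc, HB⟩ := hB
  refine ⟨hc, ?_⟩
  intro m u v hm hu hv
  have := HB m u v hm hu hv
  simp only [κD_0, κD_1, κD_2] at this ⊢
  unfold F1 at this ⊢
  split_ifs at this ⊢ <;> omega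

lemma diff_bounds (a b k : ℕ) (h : a + b + 1 ≤ k) (f : ℕ × ℕ →₀ ℕ)
    (hA : MemD 2 (κD a (k-a-b) b) f) (heq : a + f (1,2) + max b (f (2,3)) = k) :
    f (2,1) ≤ a ∧ f (2,3) ≤ k - a := by
  rw [memD2_iff] at hA
  obtain ⟨hc, HA⟩ := hA
  have e1 := HA 1 2 0 rfl (by omega) (by omega)
  have e2 := HA 1 2 2 rfl (by omega) (by omega)
  simp only [κD_0, κD_1, κD_2, F1, F3] at e1 e2
  norm_num at e1 e2
  omega

lemma fiber_struct (a b k i j : ℕ) (h : a + b + 1 ≤ k) (hi : i ≤ a) (hj : j ≤ k - a)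
    (f : ℕ × ℕ →₀ ℕ) (hfA : MemD 2 (κD a (k-a-b) b) f)
    (heq : a + f (1,2) + max b (f (2,3)) = k) (hfi : f (2,1) = i) (hfj : f (2,3) = j) :
    MemD 2 (κD i (k-i-j) j) (downF f) ∧ f = upF i (k - a - max b j) j (downF f) := by
  have hc12 : f (1,2) = k - a - max b j := by rw [← hfj]; omega
  refine ⟨memD_down a b k i j h hi hj f hfA hfi hfj, ?_⟩
  rw [up_down i (k - a - max b j) j f hfA.1 hc12 hfi hfj]

lemma main_count (a b k l N : ℕ) (h : a + b + 1 ≤ k) :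
    cntD a (k-a-b) b l N = cntD (a+1) (k-a-b-1) b l N +
      ∑ i ∈ Finset.range (a+1), ∑ j ∈ Finset.range (k-a+1),
        (if (i + (k - a - max b j) + j) ≤ l ∧
              (i + (k - a - max b j) + j) + (i+j) + 2*(l - (i + (k - a - max b j) + j)) ≤ N
         then cntD i (k-i-j) j (l - (i + (k - a - max b j) + j))
              (N - ((i + (k - a - max b j) + j) + (i+j) + 2*(l - (i + (k - a - max b j) + j))))
         else 0) := by
  classical
  set FA := (finD (κD a (k-a-b) b) l N).toFinset with hFA
  set FB := (finD (κD (a+1) (k-a-b-1) b) l N).toFinset with hFB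
  have hmemA : ∀ f, f ∈ FA ↔ MemD 2 (κD a (k-a-b) b) f ∧ len f = l ∧ wt f = N := by
    intro f; rw [hFA, Set.Finite.mem_toFinset]; rfl
  have hmemB : ∀ f, f ∈ FB ↔ MemD 2 (κD (a+1) (k-a-b-1) b) f ∧ len f = l ∧ wt f = N := by
    intro f; rw [hFB, Set.Finite.mem_toFinset]; rfl
  have hsub : FB ⊆ FA := by
    intro f hf
    rw [hmemB] at hf
    rw [hmemA]
    exact ⟨memD_mono a b k h f hf.1, hf.2⟩
  rw [cntD_eq_card, cntD_eq_card, ← hFA, ← hFB, ← Finset.card_sdiff_add_card_eq_card hsub,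
    add_comm]
  congr 1
  -- fiberwise decomposition
  have hdiffmem : ∀ f ∈ FA \ FB,
      (MemD 2 (κD a (k-a-b) b) f ∧ a + f (1,2) + max b (f (2,3)) = k) ∧
        len f = l ∧ wt f = N := by
    intro f hf
    rw [Finset.mem_sdiff, hmemA, hmemB] at hf
    obtain ⟨⟨h1, h2⟩, h3⟩ := hf
    have : MemD 2 (κD a (k-a-b) b) f ∧ ¬ MemD 2 (κD (a+1) (k-a-b-1) b) f :=
      ⟨h1, fun hb => h3 ⟨hb, h2⟩⟩
    exact ⟨(mem_diff_char a b k h f).1 this, h2⟩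
  rw [Finset.card_eq_sum_card_fiberwise
    (f := fun f : ℕ × ℕ →₀ ℕ => (f (2,1), f (2,3)))
    (t := Finset.range (a+1) ×ˢ Finset.range (k-a+1))
    (by
      intro f hf
      obtain ⟨⟨h1, h2⟩, _, _⟩ := hdiffmem f hf
      obtain ⟨hb1, hb2⟩ := diff_bounds a b k h f h1 h2
      simp only [Finset.mem_coe, Finset.mem_product, Finset.mem_range]
      exact ⟨by omega, by omega⟩),
    Finset.sum_product]
  apply Finset.sum_congr rfl
  intro i hi'
  apply Finset.sum_congr rfl
  intro j hj'
  rw [Finset.mem_range] at hi' hj'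
  have hi : i ≤ a := by omega
  have hj : j ≤ k - a := by omega
  set c := k - a - max b j with hcdef
  set E := i + c + j with hEdef
  have hmaxle : max b j ≤ k - a := by omega
  -- every fiber element decomposes
  have hfib : ∀ f ∈ (FA \ FB).filter (fun f : ℕ × ℕ →₀ ℕ => (f (2,1), f (2,3)) = (i, j)),
      MemD 2 (κD i (k-i-j) j) (downF f) ∧ f = upF i c j (downF f) ∧
        len (downF f) + E = l ∧ wt (downF f) + 2 * (l - E) + (E + (i + j)) = N ∧ E ≤ l := by
    intro f hf
    rw [Finset.mem_filter] at hf
    obtain ⟨hf1, hf2⟩ := hf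
    obtain ⟨⟨hA', heq⟩, hlen, hwt⟩ := hdiffmem f hf1
    rw [Prod.mk.injEq] at hf2
    obtain ⟨hfi, hfj⟩ := hf2
    obtain ⟨hmd, hup⟩ := fiber_struct a b k i j h hi hj f hA' heq hfi hfj
    have hlen' : len f = len (downF f) + i + c + j := by
      conv_lhs => rw [hup]
      exact len_upF i c j (downF f)
    have hwt' : wt f = wt (downF f) + 2 * len (downF f) + (2*i + c + 2*j) := by
      conv_lhs => rw [hup]
      exact wt_upF i c j (downF f)
    have hEl : E ≤ l := by omega
    refine ⟨hmd, hup, by omega, by omega, hEl⟩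
  by_cases hcase : E ≤ l ∧ E + (i+j) + 2*(l - E) ≤ N
  · rw [if_pos hcase, cntD_eq_card]
    apply Finset.card_bij' (fun f _ => downF f) (fun g _ => upF i c j g)
    · intro f hf
      obtain ⟨hmd, hup, hl, hw, hEl⟩ := hfib f hf
      rw [Set.Finite.mem_toFinset]
      exact ⟨hmd, by omega, by omega⟩
    · intro g hg
      rw [Set.Finite.mem_toFinset] at hg
      obtain ⟨hmd, hlg, hwg⟩ := hg
      have hupmem := memD_up a b k i j h hi hj g hmd
      have h21 : upF i c j g (2,1) = i := upF_at21 i c j g hmd.1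
      have h23 : upF i c j g (2,3) = j := upF_at23 i c j g hmd.1
      have h12 : upF i c j g (1,2) = c := upF_at12 i c j g
      rw [Finset.mem_filter, Finset.mem_sdiff, hmemA, hmemB]
      have hlenu := len_upF i c j g
      have hwtu := wt_upF i c j g
      have heq' : a + upF i c j g (1,2) + max b (upF i c j g (2,3)) = k := by
        rw [h12, h23]; omega
      have hnB : ¬ MemD 2 (κD (a+1) (k-a-b-1) b) (upF i c j g) :=
        fun hb => ((mem_diff_char a b k h _).2 ⟨hupmem, heq'⟩).2 hb
      refine ⟨⟨⟨hupmem, by omega, by omega⟩, ?_⟩, by rw [h21, h23]⟩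
      intro hb
      exact hnB hb.1
    · intro f hf
      obtain ⟨_, hup, _, _, _⟩ := hfib f hf
      exact hup.symm
    · intro g hg
      rw [Set.Finite.mem_toFinset] at hg
      exact down_up i c j g hg.1.1
  · rw [if_neg hcase]
    rw [Finset.card_eq_zero, Finset.eq_empty_iff_forall_notMem]
    intro f hf
    obtain ⟨hmd, hup, hl, hw, hEl⟩ := hfib f hf
    exact hcase ⟨hEl, by omega⟩

open PowerSeries in
lemma coeff_term (E m l N : ℕ) (F : PowerSeries (PowerSeries ℚ)) :
    coeff N (coeff l ((Zv * Qv) ^ E * Qv ^ m * zsub 2 F)) =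
    if E ≤ l ∧ E + m + 2 * (l - E) ≤ N
    then coeff (N - (E + m + 2 * (l - E))) (coeff (l - E) F) else 0 := by
  have h1 : (Zv * Qv) ^ E * Qv ^ m * zsub 2 F =
      (X : (PowerSeries ℚ)⟦X⟧) ^ E *
        (PowerSeries.C (R := PowerSeries ℚ) ((X : ℚ⟦X⟧) ^ (E + m)) * zsub 2 F) := by
    rw [Zv, Qv, mul_pow, ← map_pow, ← map_pow, pow_add, map_mul]
    ring
  rw [h1, coeff_X_pow_mul']
  by_cases hE : E ≤ l
  · rw [if_pos hE, coeff_C_mul]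
    have h2 : coeff (R := PowerSeries ℚ) (l - E) (zsub 2 F) =
        (X : ℚ⟦X⟧) ^ (2 * (l - E)) * coeff (l - E) F := by
      rw [zsub, coeff_mk]
    rw [h2, ← mul_assoc, ← pow_add, coeff_X_pow_mul']
    by_cases hw : E + m + 2 * (l - E) ≤ N
    · rw [if_pos (by omega), if_pos ⟨hE, hw⟩]
    · rw [if_neg (by omega), if_neg (by intro hh; exact hw hh.2)]
  · rw [if_neg hE, if_neg (by intro hh; exact hE hh.1), map_zero]

lemma coeff_DGF (x y z l N : ℕ) :
    PowerSeries.coeff N (PowerSeries.coeff l (DGF 2 (κD x y z)))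
      = ((cntD x y z l N : ℕ) : ℚ) := by
  simp [DGF, PowerSeries.coeff_mk, cntD]

/-- Proposition 4.4: for nonnegative integers `a, b, k` with `a + b ≤ k − 1`,
`𝒟⁽²⁾_{(a,k−a−b,b)}(z,q) − 𝒟⁽²⁾_{(a+1,k−a−b−1,b)}(z,q)
  = Σ_{i=0}^{a} Σ_{j=0}^{k−a} (zq)^{k+i−a+min(0,j−b)} q^{i+j} 𝒟⁽²⁾_{(i,k−i−j,j)}(zq²,q)`.
The exponent `k+i−a+min(0,j−b)` is written as the natural number `k + i − a − (b − j)`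
(truncated subtraction), which agrees with it in the given range. -/
theorem primc_D3_functional_equation (a b k : ℕ) (h : a + b + 1 ≤ k) :
    DGF 2 (fun t => if t = 0 then a else if t = 1 then k - a - b else if t = 2 then b else 0)
      - DGF 2 (fun t => if t = 0 then a + 1 else if t = 1 then k - a - b - 1
          else if t = 2 then b else 0) =
    ∑ i ∈ Finset.range (a + 1), ∑ j ∈ Finset.range (k - a + 1),
      (Zv * Qv) ^ (k + i - a - (b - j)) * Qv ^ (i + j) *
        zsub 2 (DGF 2 (fun t => if t = 0 then i else if t = 1 then k - i - j
          else if t = 2 then j else 0)) := by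
  classical
  have ea : (fun t => if t = 0 then a else if t = 1 then k - a - b else if t = 2 then b else 0)
      = κD a (k-a-b) b := rfl
  have eb : (fun t => if t = 0 then a + 1 else if t = 1 then k - a - b - 1
      else if t = 2 then b else 0) = κD (a+1) (k-a-b-1) b := rfl
  have ec : ∀ i j : ℕ, (fun t => if t = 0 then i else if t = 1 then k - i - j
      else if t = 2 then j else 0) = κD i (k-i-j) j := fun _ _ => rfl
  rw [ea, eb]
  apply PowerSeries.ext
  intro l
  apply PowerSeries.ext
  intro N
  simp only [map_sub, map_sum, ec, coeff_term, coeff_DGF]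
  have hsum : (∑ i ∈ Finset.range (a+1), ∑ j ∈ Finset.range (k-a+1),
        (if (k + i - a - (b - j)) ≤ l ∧
            (k + i - a - (b - j)) + (i+j) + 2*(l - (k + i - a - (b - j))) ≤ N
         then ((cntD i (k-i-j) j (l - (k + i - a - (b - j)))
              (N - ((k + i - a - (b - j)) + (i+j) + 2*(l - (k + i - a - (b - j)))))
            : ℕ) : ℚ)
         else 0)) =
      ∑ i ∈ Finset.range (a+1), ∑ j ∈ Finset.range (k-a+1),
        (if (i + (k - a - max b j) + j) ≤ l ∧
            (i + (k - a - max b j) + j) + (i+j) + 2*(l - (i + (k - a - max b j) + j)) ≤ N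
         then ((cntD i (k-i-j) j (l - (i + (k - a - max b j) + j))
              (N - ((i + (k - a - max b j) + j) + (i+j) + 2*(l - (i + (k - a - max b j) + j))))
            : ℕ) : ℚ)
         else 0) := by
    apply Finset.sum_congr rfl
    intro i hi
    apply Finset.sum_congr rfl
    intro j hj
    rw [Finset.mem_range] at hi hj
    have hE : k + i - a - (b - j) = i + (k - a - max b j) + j := by omega
    rw [hE]
  rw [hsum]
  have hnat := main_count a b k l N h
  have hQ : ((cntD a (k-a-b) b l N : ℕ) : ℚ) =
      ((cntD (a+1) (k-a-b-1) b l N : ℕ) : ℚ) +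
      ∑ i ∈ Finset.range (a+1), ∑ j ∈ Finset.range (k-a+1),
        (if (i + (k - a - max b j) + j) ≤ l ∧
            (i + (k - a - max b j) + j) + (i+j) + 2*(l - (i + (k - a - max b j) + j)) ≤ N
         then ((cntD i (k-i-j) j (l - (i + (k - a - max b j) + j))
              (N - ((i + (k - a - max b j) + j) + (i+j) + 2*(l - (i + (k - a - max b j) + j))))
            : ℕ) : ℚ)
         else 0) := by
    exact_mod_cast congrArg (fun n : ℕ => (n : ℚ)) hnat
  rw [hQ]
  ring
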